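/- Let l ≥ 1 be an integer, δ ∈ k, and H̃ = X^{l+1} + δ·X^{2l+1}. (a) For every c ∈ k there exists a unique Φ ∈ k⟦X⟧ with constant coefficient 0, coefficient of X equal to 1, and coefficient of X^{l+1} equal to c, such that H̃∘Φ = Φ′·H̃. (b) Any such solution Φ has coefficient of X^j equal to 0 for every j ≥ 2 with j ≢ 1 (mod l). (c) If Φ₁ and Φ₂ are two such solutions with coefficients c and c′ of X^{l+1} respectively, then Φ₁∘Φ₂ = Φ₂∘Φ₁ and the coefficient of X^{l+1} in Φ₁∘Φ₂ equals c + c′; hence this solution group is isomorphic to the additive group (k, +). -/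

import Mathlib

open PowerSeries

variable {k : Type*} [Field k] [CharZero k]

/-- Substitution of `g` (with zero constant coefficient) into `f`. -/
noncomputable def comp (f g : PowerSeries k) : PowerSeries k :=
  PowerSeries.mk fun m => ∑ n ∈ Finset.range (m + 1),
    PowerSeries.coeff n f * PowerSeries.coeff m (g ^ n)

/-- The normal form generator. -/
noncomputable def Htilde (l : ℕ) (δ : k) : PowerSeries k :=
  X ^ (l + 1) + C δ * X ^ (2 * l + 1)

set_option linter.unusedSectionVars false
set_option linter.unusedVariables false

lemma coeff_derivativeFun' (f : PowerSeries k) (n : ℕ) :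
    coeff n (derivativeFun f) = coeff (n + 1) f * (n + 1) :=
  coeff_derivative f n

lemma derivativeFun_C' (a : k) : derivativeFun (C a : PowerSeries k) = 0 :=
  derivative_C

lemma coeff_comp (f g : PowerSeries k) (m : ℕ) :
    coeff m (comp f g) = ∑ n ∈ Finset.range (m + 1),
      coeff n f * coeff m (g ^ n) := by
  simp [comp]

lemma coeff_pow_eq_zero {g : PowerSeries k} (hg : constantCoeff g = 0)
    {m n : ℕ} (h : m < n) : coeff m (g ^ n) = 0 := by
  have hd : (X : PowerSeries k) ^ n ∣ g ^ n :=
    pow_dvd_pow_of_dvd (X_dvd_iff.mpr hg) n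
  exact X_pow_dvd_iff.mp hd m h

lemma coeff_pow_eq_zero' {g : PowerSeries k} {r : ℕ} (hg : ∀ j < r, coeff j g = 0)
    {m n : ℕ} (h : m < r * n) : coeff m (g ^ n) = 0 := by
  have hd : (X : PowerSeries k) ^ (r * n) ∣ g ^ n := by
    rw [pow_mul]
    exact pow_dvd_pow_of_dvd (X_pow_dvd_iff.mpr hg) n
  exact X_pow_dvd_iff.mp hd m h

lemma comp_add (f₁ f₂ g : PowerSeries k) :
    comp (f₁ + f₂) g = comp f₁ g + comp f₂ g := by
  ext m
  simp [coeff_comp, add_mul, Finset.sum_add_distrib]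

lemma comp_C (a : k) (g : PowerSeries k) : comp (C a) g = C a := by
  ext m
  rw [coeff_comp]
  rw [Finset.sum_eq_single 0]
  · simp [coeff_C]
  · intro n hn hn0
    simp [coeff_C, hn0]
  · simp

lemma comp_one (g : PowerSeries k) : comp 1 g = 1 := by
  simpa using comp_C (1 : k) g

lemma comp_X {g : PowerSeries k} (hg : constantCoeff g = 0) : comp X g = g := by
  ext m
  rw [coeff_comp, Finset.sum_eq_single 1]
  · simp
  · intro n hn hn1
    simp [coeff_X, hn1]
  · intro h
    simp only [Finset.mem_range, not_lt] at h
    have hm : m = 0 := by omega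
    subst hm
    simp [hg]

lemma comp_mul {g : PowerSeries k} (hg : constantCoeff g = 0) (f₁ f₂ : PowerSeries k) :
    comp (f₁ * f₂) g = comp f₁ g * comp f₂ g := by
  ext m
  have key : ∀ f : PowerSeries k, ∀ i ≤ m, coeff i (comp f g)
      = ∑ p ∈ Finset.range (m + 1), coeff p f * coeff i (g ^ p) := by
    intro f i hi
    rw [coeff_comp]
    apply Finset.sum_subset
    · intro x hx
      simp only [Finset.mem_range] at hx ⊢
      omega
    · intro x _ hx
      simp only [Finset.mem_range, not_lt] at hx
      rw [coeff_pow_eq_zero hg (by omega), mul_zero]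
  -- RHS
  rw [coeff_mul]
  have rhs : ∑ ij ∈ Finset.HasAntidiagonal.antidiagonal m, coeff ij.1 (comp f₁ g) * coeff ij.2 (comp f₂ g)
      = ∑ p ∈ Finset.range (m+1), ∑ q ∈ Finset.range (m+1),
          coeff p f₁ * coeff q f₂ * coeff m (g ^ (p + q)) := by
    have : ∀ ij ∈ Finset.HasAntidiagonal.antidiagonal m,
        coeff ij.1 (comp f₁ g) * coeff ij.2 (comp f₂ g)
        = ∑ p ∈ Finset.range (m+1), ∑ q ∈ Finset.range (m+1),
            coeff p f₁ * coeff q f₂ * (coeff ij.1 (g ^ p) * coeff ij.2 (g ^ q)) := by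
      intro ij hij
      rw [Finset.HasAntidiagonal.mem_antidiagonal] at hij
      rw [key f₁ ij.1 (by omega), key f₂ ij.2 (by omega), Finset.sum_mul_sum]
      apply Finset.sum_congr rfl; intro p _
      apply Finset.sum_congr rfl; intro q _
      ring
    rw [Finset.sum_congr rfl this, Finset.sum_comm]
    apply Finset.sum_congr rfl; intro p _
    rw [Finset.sum_comm]
    apply Finset.sum_congr rfl; intro q _
    rw [← Finset.mul_sum, pow_add, coeff_mul]
  rw [rhs, coeff_comp]
  -- LHS
  have lhs : ∑ n ∈ Finset.range (m + 1), coeff n (f₁ * f₂) * coeff m (g ^ n)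
      = ∑ p ∈ Finset.range (m+1), ∑ q ∈ Finset.range (m+1),
          coeff p f₁ * coeff q f₂ * coeff m (g ^ (p + q)) := by
    have step : ∀ n ∈ Finset.range (m+1), coeff n (f₁ * f₂) * coeff m (g ^ n)
        = ∑ ij ∈ Finset.HasAntidiagonal.antidiagonal n,
            coeff ij.1 f₁ * coeff ij.2 f₂ * coeff m (g ^ (ij.1 + ij.2)) := by
      intro n hn
      rw [coeff_mul, Finset.sum_mul]
      apply Finset.sum_congr rfl
      intro ij hij
      rw [Finset.HasAntidiagonal.mem_antidiagonal] at hij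
      rw [hij]
    rw [Finset.sum_congr rfl step]
    have hdisj : (↑(Finset.range (m+1)) : Set ℕ).PairwiseDisjoint Finset.HasAntidiagonal.antidiagonal := by
      intro a _ b _ hab
      simp only [Function.onFun, Finset.disjoint_left, Finset.HasAntidiagonal.mem_antidiagonal]
      intro x h1 h2
      exact hab (by omega)
    rw [← Finset.sum_biUnion hdisj]
    symm
    rw [← Finset.sum_product']
    refine (Finset.sum_subset ?_ ?_).symm
    · intro x hx
      simp only [Finset.mem_biUnion, Finset.mem_range, Finset.HasAntidiagonal.mem_antidiagonal] at hx
      obtain ⟨n, hn, hx⟩ := hx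
      simp only [Finset.mem_product, Finset.mem_range]
      omega
    · intro x hx hx'
      simp only [Finset.mem_biUnion, Finset.mem_range, Finset.HasAntidiagonal.mem_antidiagonal] at hx'
      push_neg at hx'
      have : m < x.1 + x.2 := by
        by_contra hc
        exact hx' (x.1 + x.2) (by omega) rfl
      rw [coeff_pow_eq_zero hg this, mul_zero]
  rw [lhs]

lemma comp_pow {g : PowerSeries k} (hg : constantCoeff g = 0) (f : PowerSeries k) (j : ℕ) :
    comp (f ^ j) g = (comp f g) ^ j := by
  induction j with
  | zero => simpa using comp_one g
  | succ n ih => rw [pow_succ, comp_mul hg, ih, pow_succ]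

lemma comp_C_mul {g : PowerSeries k} (hg : constantCoeff g = 0) (a : k) (f : PowerSeries k) :
    comp (C a * f) g = C a * comp f g := by
  rw [comp_mul hg, comp_C]

lemma comp_Htilde {g : PowerSeries k} (hg : constantCoeff g = 0) (l : ℕ) (δ : k) :
    comp (Htilde l δ) g = g ^ (l + 1) + C δ * g ^ (2 * l + 1) := by
  rw [Htilde, comp_add, comp_pow hg, comp_C_mul hg, comp_pow hg, comp_X hg]

lemma coeff_self_pow {g : PowerSeries k} (hg : constantCoeff g = 0) (n : ℕ) :
    coeff n (g ^ n) = (coeff 1 g) ^ n := by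
  induction n with
  | zero => simp
  | succ n ih =>
    rw [pow_succ, coeff_mul, Finset.sum_eq_single (n, 1)]
    · rw [ih, pow_succ]
    · intro b hb hb'
      rw [Finset.HasAntidiagonal.mem_antidiagonal] at hb
      rcases Nat.lt_or_ge b.1 n with h | h
      · rw [coeff_pow_eq_zero hg h, zero_mul]
      · have : b.2 = 0 ∨ (b.1 = n ∧ b.2 = 1) := by omega
        rcases this with h0 | ⟨h1, h2⟩
        · rw [h0]
          simp [hg]
        · exact absurd (Prod.ext h1 h2) hb'
    · intro h
      exact absurd (by simp) h

lemma derivativeFun_pow (g : PowerSeries k) (n : ℕ) :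
    derivativeFun (g ^ (n + 1)) = (n + 1 : ℕ) • (g ^ n * derivativeFun g) := by
  induction n with
  | zero => simp
  | succ n ih =>
    rw [pow_succ, derivativeFun_mul, ih]
    simp only [smul_eq_mul, nsmul_eq_mul]
    push_cast
    ring

lemma coeff_comp_congr {f f' : PowerSeries k} (g : PowerSeries k) {m : ℕ}
    (h : ∀ j ≤ m, coeff j f = coeff j f') :
    coeff m (comp f g) = coeff m (comp f' g) := by
  rw [coeff_comp, coeff_comp]
  apply Finset.sum_congr rfl
  intro n hn
  rw [Finset.mem_range] at hn
  rw [h n (by omega)]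

lemma derivativeFun_comp {g : PowerSeries k} (hg : constantCoeff g = 0) (f : PowerSeries k) :
    derivativeFun (comp f g) = comp (derivativeFun f) g * derivativeFun g := by
  have poly : ∀ P : Polynomial k,
      derivativeFun (comp (P : PowerSeries k) g)
        = comp (derivativeFun (P : PowerSeries k)) g * derivativeFun g := by
    intro P
    induction P using Polynomial.induction_on' with
    | add p q hp hq =>
      rw [Polynomial.coe_add, comp_add, derivativeFun_add, derivativeFun_add, hp, hq,
        comp_add, add_mul]
    | monomial n a =>
      have hmono : ((Polynomial.monomial n a : Polynomial k) : PowerSeries k)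
          = C a * X ^ n := by
        rw [Polynomial.coe_monomial, X_pow_eq, monomial_eq_mk]
        ext j
        simp [coeff_monomial, coeff_C_mul]
      rw [hmono]
      have comp_zero : comp (0 : PowerSeries k) g = 0 := by
        ext j; simp [coeff_comp]
      have e1 : ∀ h : PowerSeries k, derivativeFun (C a * h)
          = C a * derivativeFun h := by
        intro h
        rw [derivativeFun_mul, derivativeFun_C', smul_zero, add_zero, smul_eq_mul]
      cases n with
      | zero =>
        rw [pow_zero, mul_one, comp_C, derivativeFun_C', comp_zero, zero_mul]
      | succ n =>
        rw [comp_C_mul hg, comp_pow hg, comp_X hg, e1, e1, derivativeFun_pow,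
          derivativeFun_pow (X : PowerSeries k) n]
        have dX : derivativeFun (X : PowerSeries k) = 1 := derivative_X
        rw [dX, mul_one, nsmul_eq_mul, nsmul_eq_mul,
          ← map_natCast (C (R := k)) (n + 1)]
        rw [comp_C_mul hg, comp_C_mul hg, comp_pow hg, comp_X hg]
        ring
  ext m
  set P := trunc (m + 2) f with hP
  have h1 : coeff m (derivativeFun (comp f g)) = coeff m (derivativeFun (comp (P : PowerSeries k) g)) := by
    rw [coeff_derivativeFun', coeff_derivativeFun']
    rw [coeff_comp_congr g (f' := (P : PowerSeries k)) ?_]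
    intro j hj
    rw [hP, Polynomial.coeff_coe, coeff_trunc, if_pos (by omega)]
  have h2 : coeff m (comp (derivativeFun f) g * derivativeFun g)
      = coeff m (comp (derivativeFun (P : PowerSeries k)) g * derivativeFun g) := by
    rw [coeff_mul, coeff_mul]
    apply Finset.sum_congr rfl
    intro ij hij
    rw [Finset.HasAntidiagonal.mem_antidiagonal] at hij
    congr 1
    apply coeff_comp_congr
    intro j hj
    rw [coeff_derivativeFun', coeff_derivativeFun', hP, Polynomial.coeff_coe, coeff_trunc,
      if_pos (by omega)]
  rw [h1, h2, poly]

/-- The defect of the Aczél–Jabotinsky equation. -/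
noncomputable def AJ (l : ℕ) (δ : k) (Φ : PowerSeries k) : PowerSeries k :=
  Φ ^ (l + 1) + C δ * Φ ^ (2 * l + 1) - derivativeFun Φ * Htilde l δ

lemma equation_iff {Φ : PowerSeries k} (hΦ : constantCoeff Φ = 0) (l : ℕ) (δ : k) :
    comp (Htilde l δ) Φ = derivativeFun Φ * Htilde l δ ↔ AJ l δ Φ = 0 := by
  rw [comp_Htilde hΦ, AJ, sub_eq_zero]

lemma coeff_pow_congr {φ ψ : PowerSeries k} (hφ : ∀ j < 2, coeff j φ = 0)
    (hψ : ∀ j < 2, coeff j ψ = 0) {d : ℕ} (h : ∀ j ≤ d, coeff j φ = coeff j ψ) :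
    ∀ i m, m ≤ d + 2 * i → coeff m (φ ^ (i + 1)) = coeff m (ψ ^ (i + 1)) := by
  intro i
  induction i with
  | zero => intro m hm; simpa using h m (by omega)
  | succ i ih =>
    intro m hm
    rw [pow_succ φ (i+1), pow_succ ψ (i+1), coeff_mul, coeff_mul]
    apply Finset.sum_congr rfl
    intro pq hpq
    rw [Finset.HasAntidiagonal.mem_antidiagonal] at hpq
    by_cases h2 : pq.2 < 2
    · rw [hφ _ h2, hψ _ h2, mul_zero, mul_zero]
    · by_cases h1 : pq.1 < 2 * (i + 1)
      · rw [coeff_pow_eq_zero' hφ h1, coeff_pow_eq_zero' hψ h1, zero_mul, zero_mul]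
      · rw [ih pq.1 (by omega), h pq.2 (by omega)]

lemma coeff_add_X_pow (φ : PowerSeries k) (J m : ℕ) :
    coeff m ((X + φ) ^ J) = ∑ i ∈ Finset.range (J + 1),
      (J.choose i : k) * (if J - i ≤ m then coeff (m - (J - i)) (φ ^ i) else 0) := by
  rw [add_comm, add_pow, map_sum]
  apply Finset.sum_congr rfl
  intro i _
  have : φ ^ i * X ^ (J - i) * (J.choose i : PowerSeries k)
      = C (J.choose i : k) * (φ ^ i * X ^ (J - i)) := by
    rw [← map_natCast (C (R := k)) (J.choose i)]
    ring
  rw [this, coeff_C_mul, coeff_mul_X_pow']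

lemma keyLinear (l : ℕ) (hl : 1 ≤ l) (δ : k) {n : ℕ} (hn : 2 ≤ n)
    {Φ Ψ : PowerSeries k} (hΦ0 : constantCoeff Φ = 0) (hΦ1 : coeff 1 Φ = 1)
    (hΨ0 : constantCoeff Ψ = 0) (hΨ1 : coeff 1 Ψ = 1)
    (hagree : ∀ j < n, coeff j Φ = coeff j Ψ) :
    coeff (n + l) (AJ l δ Φ) - coeff (n + l) (AJ l δ Ψ)
      = ((l : k) + 1 - n) * (coeff n Φ - coeff n Ψ) := by
  set φ := Φ - X with hφdef
  set ψ := Ψ - X with hψdef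
  have hΦeq : Φ = X + φ := by rw [hφdef]; ring
  have hΨeq : Ψ = X + ψ := by rw [hψdef]; ring
  have hφ0 : ∀ j < 2, coeff j φ = 0 := by
    intro j hj
    rw [hφdef, map_sub]
    interval_cases j
    · rw [coeff_zero_eq_constantCoeff, hΦ0]; simp
    · rw [hΦ1, coeff_one_X, sub_self]
  have hψ0 : ∀ j < 2, coeff j ψ = 0 := by
    intro j hj
    rw [hψdef, map_sub]
    interval_cases j
    · rw [coeff_zero_eq_constantCoeff, hΨ0]; simp
    · rw [hΨ1, coeff_one_X, sub_self]
  have hφψ : ∀ j < n, coeff j φ = coeff j ψ := by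
    intro j hj
    rw [hφdef, hψdef, map_sub, map_sub, hagree j hj]
  have hφn : coeff n φ = coeff n Φ := by
    rw [hφdef, map_sub, coeff_X, if_neg (by omega), sub_zero]
  have hψn : coeff n ψ = coeff n Ψ := by
    rw [hψdef, map_sub, coeff_X, if_neg (by omega), sub_zero]
  -- expansion of the AJ coefficient
  have expand : ∀ (Θ θ : PowerSeries k), Θ = X + θ →
      coeff (n + l) (AJ l δ Θ)
        = (∑ i ∈ Finset.range (l + 2), ((l+1).choose i : k) *
              (if l+1-i ≤ n+l then coeff (n+l-(l+1-i)) (θ ^ i) else 0))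
          + δ * (∑ i ∈ Finset.range (2*l + 2), ((2*l+1).choose i : k) *
              (if 2*l+1-i ≤ n+l then coeff (n+l-(2*l+1-i)) (θ ^ i) else 0))
          - coeff n Θ * n
          - δ * (if 2*l+1 ≤ n+l then coeff (n+l-(2*l+1)+1) Θ * ((n+l-(2*l+1) : ℕ) + 1 : k) else 0) := by
    intro Θ θ hθ
    rw [AJ, map_sub, map_add, Htilde, mul_add, map_add]
    have e1 : coeff (n+l) (Θ ^ (l+1)) = ∑ i ∈ Finset.range (l + 2), ((l+1).choose i : k) *
        (if l+1-i ≤ n+l then coeff (n+l-(l+1-i)) (θ ^ i) else 0) := by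
      rw [hθ, coeff_add_X_pow]
    have e2 : coeff (n+l) (C δ * Θ ^ (2*l+1)) = δ * ∑ i ∈ Finset.range (2*l + 2),
        ((2*l+1).choose i : k) *
        (if 2*l+1-i ≤ n+l then coeff (n+l-(2*l+1-i)) (θ ^ i) else 0) := by
      rw [coeff_C_mul, hθ, coeff_add_X_pow]
    have e3 : coeff (n+l) (derivativeFun Θ * X ^ (l+1)) = coeff n Θ * n := by
      rw [coeff_mul_X_pow', if_pos (by omega)]
      have hd : n + l - (l+1) = n - 1 := by omega
      rw [hd, coeff_derivativeFun']
      have h2 : n - 1 + 1 = n := by omega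
      rw [h2]
      congr 1
      have : ((n - 1 : ℕ) : k) = (n : k) - 1 := by
        rw [Nat.cast_sub (by omega : 1 ≤ n)]
        norm_num
      rw [this]
      ring
    have e4 : coeff (n+l) (derivativeFun Θ * (C δ * X ^ (2*l+1)))
        = δ * (if 2*l+1 ≤ n+l then coeff (n+l-(2*l+1)+1) Θ * ((n+l-(2*l+1) : ℕ) + 1 : k) else 0) := by
      have hc : derivativeFun Θ * (C δ * X ^ (2*l+1))
          = C δ * (derivativeFun Θ * X ^ (2*l+1)) := by ring
      rw [hc, coeff_C_mul, coeff_mul_X_pow']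
      split_ifs with h
      · rw [coeff_derivativeFun']
      · rfl
    rw [e1, e2, e3, e4]
    ring
  rw [expand Φ φ hΦeq, expand Ψ ψ hΨeq]
  have S1 : (∑ i ∈ Finset.range (l + 2), ((l+1).choose i : k) *
              (if l+1-i ≤ n+l then coeff (n+l-(l+1-i)) (φ ^ i) else 0))
          - (∑ i ∈ Finset.range (l + 2), ((l+1).choose i : k) *
              (if l+1-i ≤ n+l then coeff (n+l-(l+1-i)) (ψ ^ i) else 0))
      = ((l : k) + 1) * (coeff n φ - coeff n ψ) := by
    rw [← Finset.sum_sub_distrib, Finset.sum_eq_single 1]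
    · rw [if_pos (by omega), if_pos (by omega), ← mul_sub]
      have h1 : n + l - (l + 1 - 1) = n := by omega
      rw [h1, pow_one, pow_one, Nat.choose_one_right]
      push_cast
      ring
    · intro i hi hi1
      rw [Finset.mem_range] at hi
      rw [← mul_sub]
      rcases Nat.eq_zero_or_pos i with rfl | hipos
      · simp
      · have hi2 : 2 ≤ i := by omega
        rw [if_pos (by omega), if_pos (by omega)]
        obtain ⟨j, rfl⟩ : ∃ j, i = j + 1 + 1 := ⟨i - 2, by omega⟩
        rw [coeff_pow_congr (d := n-1) hφ0 hψ0 (fun j hj => hφψ j (by omega)) (j+1) _ (by omega),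
          sub_self, mul_zero]
    · intro h
      exact absurd (Finset.mem_range.mpr (by omega)) h
  have S2 : (∑ i ∈ Finset.range (2*l + 2), ((2*l+1).choose i : k) *
              (if 2*l+1-i ≤ n+l then coeff (n+l-(2*l+1-i)) (φ ^ i) else 0))
      = (∑ i ∈ Finset.range (2*l + 2), ((2*l+1).choose i : k) *
              (if 2*l+1-i ≤ n+l then coeff (n+l-(2*l+1-i)) (ψ ^ i) else 0)) := by
    apply Finset.sum_congr rfl
    intro i _
    congr 1
    split_ifs with h
    · rcases Nat.eq_zero_or_pos i with rfl | hipos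
      · simp
      · rcases Nat.eq_or_lt_of_le hipos with h1 | hi2
        · -- i = 1
          rw [← h1, pow_one, pow_one]
          exact hφψ _ (by omega)
        · obtain ⟨j, rfl⟩ : ∃ j, i = j + 1 + 1 := ⟨i - 2, by omega⟩
          exact coeff_pow_congr (d := n-1) hφ0 hψ0 (fun j hj => hφψ j (by omega)) (j+1) _ (by omega)
    · rfl
  have S3 : (if 2*l+1 ≤ n+l then coeff (n+l-(2*l+1)+1) Φ * ((n+l-(2*l+1) : ℕ) + 1 : k) else 0)
      = (if 2*l+1 ≤ n+l then coeff (n+l-(2*l+1)+1) Ψ * ((n+l-(2*l+1) : ℕ) + 1 : k) else 0) := by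
    split_ifs with h
    · rw [hagree _ (by omega)]
    · rfl
  rw [hφn, hψn] at S1
  rw [S2, S3]
  linear_combination S1

lemma AJ_X (l : ℕ) (δ : k) : AJ l δ (X : PowerSeries k) = 0 := by
  have dX : derivativeFun (X : PowerSeries k) = 1 := derivative_X
  rw [AJ, dX, one_mul, Htilde]
  ring

lemma AJ_low (l : ℕ) (hl : 1 ≤ l) (δ : k) {Φ : PowerSeries k}
    (h0 : constantCoeff Φ = 0) (h1 : coeff 1 Φ = 1) {m : ℕ} (hm : m ≤ l + 1) :
    coeff m (AJ l δ Φ) = 0 := by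
  have e2 : coeff m (C δ * Φ ^ (2*l+1)) = 0 := by
    rw [coeff_C_mul, coeff_pow_eq_zero h0 (by omega), mul_zero]
  have e4 : coeff m (derivativeFun Φ * (C δ * X ^ (2*l+1))) = 0 := by
    have hc : derivativeFun Φ * (C δ * X ^ (2*l+1))
        = C δ * (derivativeFun Φ * X ^ (2*l+1)) := by ring
    rw [hc, coeff_C_mul, coeff_mul_X_pow', if_neg (by omega), mul_zero]
  rw [AJ, Htilde, mul_add, map_sub, map_add, map_add, e2, e4, add_zero, add_zero]
  rcases Nat.lt_or_ge m (l+1) with h | h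
  · rw [coeff_pow_eq_zero h0 h, coeff_mul_X_pow', if_neg (by omega), sub_zero]
  · have hm' : m = l + 1 := by omega
    subst hm'
    rw [coeff_self_pow h0, h1, one_pow, coeff_mul_X_pow', if_pos le_rfl,
      Nat.sub_self]
    rw [coeff_derivativeFun', h1]
    norm_num

noncomputable def nextC (l : ℕ) (δ c : k) (P : PowerSeries k) (n : ℕ) : k :=
  if n = 0 then 0 else if n = 1 then 1 else if n = l + 1 then c
  else coeff (n + l) (AJ l δ P) / ((n : k) - ((l : k) + 1))

noncomputable def approx (l : ℕ) (δ c : k) : ℕ → PowerSeries k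
  | 0 => 0
  | n + 1 => approx l δ c n + C (nextC l δ c (approx l δ c n) n) * X ^ n

/-- The candidate solution. -/
noncomputable def sol (l : ℕ) (δ c : k) : PowerSeries k :=
  mk fun n => coeff n (approx l δ c (n + 1))

lemma coeff_approx_hi (l : ℕ) (δ c : k) : ∀ n j, n ≤ j → coeff j (approx l δ c n) = 0 := by
  intro n
  induction n with
  | zero => intro j _; simp [approx]
  | succ n ih =>
    intro j hj
    rw [approx, map_add, ih j (by omega), coeff_C_mul, coeff_X_pow, if_neg (by omega),
      mul_zero, add_zero]

lemma coeff_approx_stable (l : ℕ) (δ c : k) {n m j : ℕ} (hnm : n ≤ m) (hj : j < n) :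
    coeff j (approx l δ c n) = coeff j (approx l δ c m) := by
  induction m with
  | zero => omega
  | succ m ih =>
    rcases Nat.eq_or_lt_of_le hnm with h | h
    · rw [h]
    · rw [approx, map_add, coeff_C_mul, coeff_X_pow, if_neg (by omega), mul_zero, add_zero,
        ih (by omega)]

lemma coeff_sol_eq_approx (l : ℕ) (δ c : k) {n j : ℕ} (hj : j < n) :
    coeff j (sol l δ c) = coeff j (approx l δ c n) := by
  rw [sol, coeff_mk]
  exact coeff_approx_stable l δ c (by omega) (by omega)

lemma coeff_sol (l : ℕ) (δ c : k) (n : ℕ) :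
    coeff n (sol l δ c) = nextC l δ c (approx l δ c n) n := by
  rw [sol, coeff_mk, approx, map_add, coeff_approx_hi l δ c n n le_rfl, coeff_C_mul,
    coeff_X_pow, if_pos rfl, mul_one, zero_add]

lemma approx_low (l : ℕ) (hl : 1 ≤ l) (δ c : k) : ∀ n, 2 ≤ n → n ≤ l + 1 →
    approx l δ c n = X := by
  intro n
  induction n with
  | zero => omega
  | succ n ih =>
    intro h2 hle
    rcases Nat.lt_or_ge n 2 with h | h
    · have : n = 1 := by omega
      subst this
      have h1 : approx l δ c 1 = 0 := by
        simp [approx, nextC]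
      rw [approx, h1, nextC]
      rw [if_neg one_ne_zero, if_pos rfl]
      simp
    · rw [approx, ih h (by omega), nextC, if_neg (by omega), if_neg (by omega),
        if_neg (by omega), AJ_X]
      simp

lemma sol_spec (l : ℕ) (hl : 1 ≤ l) (δ c : k) :
    constantCoeff (sol l δ c) = 0 ∧ coeff 1 (sol l δ c) = 1 ∧
      coeff (l + 1) (sol l δ c) = c ∧ AJ l δ (sol l δ c) = 0 := by
  have h0 : constantCoeff (sol l δ c) = 0 := by
    rw [← coeff_zero_eq_constantCoeff, coeff_sol, nextC, if_pos rfl]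
  have h1 : coeff 1 (sol l δ c) = 1 := by
    rw [coeff_sol, nextC, if_neg one_ne_zero, if_pos rfl]
  have hc : coeff (l + 1) (sol l δ c) = c := by
    rw [coeff_sol, nextC, if_neg (by omega), if_neg (by omega), if_pos rfl]
  refine ⟨h0, h1, hc, ?_⟩
  ext m
  rw [map_zero]
  rcases Nat.lt_or_ge m (l + 2) with hm | hm
  · exact AJ_low l hl δ h0 h1 (by omega)
  · obtain ⟨n, hmn, hn2⟩ : ∃ n, m = n + l ∧ 2 ≤ n := ⟨m - l, by omega, by omega⟩
    subst hmn
    -- approx n data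
    have ha0 : constantCoeff (approx l δ c n) = 0 := by
      rw [← coeff_zero_eq_constantCoeff, ← coeff_sol_eq_approx l δ c (by omega),
        coeff_zero_eq_constantCoeff, h0]
    have ha1 : coeff 1 (approx l δ c n) = 1 := by
      rw [← coeff_sol_eq_approx l δ c (by omega), h1]
    have hagree : ∀ j < n, coeff j (sol l δ c) = coeff j (approx l δ c n) :=
      fun j hj => coeff_sol_eq_approx l δ c hj
    have key := keyLinear l hl δ hn2 h0 h1 ha0 ha1 hagree
    rw [coeff_approx_hi l δ c n n le_rfl, sub_zero] at key
    by_cases hcase : n = l + 1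
    · subst hcase
      have : approx l δ c (l+1) = X := by
        rcases Nat.eq_or_lt_of_le hl with h | h
        · rw [← h]
          exact approx_low l hl δ c 2 le_rfl (by omega)
        · exact approx_low l hl δ c (l+1) (by omega) le_rfl
      rw [this, AJ_X] at key
      rw [map_zero, sub_zero] at key
      rw [key]
      push_cast
      ring
    · have hfac : ((n : k) - ((l : k) + 1)) ≠ 0 := by
        have h' : ((l : k) + 1) = ((l + 1 : ℕ) : k) := by push_cast; ring
        rw [h', sub_ne_zero]
        exact fun hh => hcase (by exact_mod_cast hh)
      have hcoeff : coeff n (sol l δ c)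
          = coeff (n + l) (AJ l δ (approx l δ c n)) / ((n : k) - ((l : k) + 1)) := by
        rw [coeff_sol, nextC, if_neg (by omega), if_neg (by omega), if_neg hcase]
      rw [sub_eq_iff_eq_add] at key
      rw [key, hcoeff]
      field_simp
      ring

lemma sol_unique (l : ℕ) (hl : 1 ≤ l) (δ : k) {Φ Ψ : PowerSeries k}
    (hΦ0 : constantCoeff Φ = 0) (hΦ1 : coeff 1 Φ = 1)
    (hΨ0 : constantCoeff Ψ = 0) (hΨ1 : coeff 1 Ψ = 1)
    (hΦΨ : coeff (l + 1) Φ = coeff (l + 1) Ψ)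
    (hΦ : AJ l δ Φ = 0) (hΨ : AJ l δ Ψ = 0) : Φ = Ψ := by
  ext j
  induction j using Nat.strong_induction_on with
  | _ j ih =>
    rcases Nat.lt_or_ge j 2 with hj | hj
    · interval_cases j
      · rw [coeff_zero_eq_constantCoeff, hΦ0, hΨ0]
      · rw [hΦ1, hΨ1]
    · by_cases hcase : j = l + 1
      · rw [hcase, hΦΨ]
      · have key := keyLinear l hl δ hj hΦ0 hΦ1 hΨ0 hΨ1 (fun i hi => ih i hi)
        rw [hΦ, hΨ, map_zero, sub_zero] at key
        have hfac : ((l : k) + 1 - j) ≠ 0 := by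
          have h' : ((l : k) + 1) = ((l + 1 : ℕ) : k) := by push_cast; ring
          rw [h', sub_ne_zero]
          exact fun hh => hcase (by exact_mod_cast hh.symm)
        have := (mul_eq_zero.mp key.symm).resolve_left hfac
        exact sub_eq_zero.mp this

/-- Part (a). -/
lemma part_a (l : ℕ) (hl : 1 ≤ l) (δ : k) (c : k) :
    ∃! Φ : PowerSeries k,
        constantCoeff Φ = 0 ∧ coeff 1 Φ = 1 ∧ coeff (l + 1) Φ = c ∧
        comp (Htilde l δ) Φ = derivativeFun Φ * Htilde l δ := by
  obtain ⟨h0, h1, hc, hAJ⟩ := sol_spec l hl δ c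
  refine ⟨sol l δ c, ⟨h0, h1, hc, ?_⟩, ?_⟩
  · rw [equation_iff h0]
    exact hAJ
  · rintro Ψ ⟨g0, g1, gc, geq⟩
    exact sol_unique l hl δ g0 g1 h0 h1 (by rw [gc, hc]) ((equation_iff g0 l δ).mp geq) hAJ

section BaseChange

variable {K : Type*} [Field K] [CharZero K] (σ : k →+* K)

lemma map_AJ (l : ℕ) (δ : k) (Φ : PowerSeries k) :
    PowerSeries.map σ (AJ l δ Φ) = AJ l (σ δ) (PowerSeries.map σ Φ) := by
  have hH : PowerSeries.map σ (Htilde l δ) = Htilde l (σ δ) := by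
    rw [Htilde, Htilde, map_add, map_mul, map_pow, map_pow, map_X, map_C]
  have hD : PowerSeries.map σ (derivativeFun Φ) = derivativeFun (PowerSeries.map σ Φ) := by
    ext n
    rw [coeff_map, coeff_derivativeFun', coeff_derivativeFun', coeff_map, map_mul]
    congr 1
    push_cast
    simp
  rw [AJ, AJ, map_sub, map_add, map_mul, map_mul, map_pow, map_pow, map_C, hD, hH]

end BaseChange

section Rescale

lemma rescale_AJ (l : ℕ) (hl : 1 ≤ l) (δ : k) {s : k} (hs : s ^ l = 1) (hs0 : s ≠ 0)
    (Φ : PowerSeries k) :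
    AJ l δ (C s⁻¹ * rescale s Φ) = C s⁻¹ * rescale s (AJ l δ Φ) := by
  have hsl1 : s ^ (l + 1) = s := by rw [pow_succ, hs, one_mul]
  have hs2l1 : s ^ (2 * l + 1) = s := by
    rw [pow_succ, two_mul, pow_add, hs, one_mul, one_mul]
  have hsi : s⁻¹ ^ l = 1 := by rw [inv_pow, hs, inv_one]
  have hsil1 : s⁻¹ ^ (l + 1) = s⁻¹ := by rw [pow_succ, hsi, one_mul]
  have hsil2 : s⁻¹ ^ (2 * l + 1) = s⁻¹ := by
    rw [pow_succ, two_mul, pow_add, hsi, one_mul, one_mul]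
  have hrD : derivativeFun (rescale s Φ) = C s * rescale s (derivativeFun Φ) := by
    ext n
    rw [coeff_derivativeFun', coeff_rescale, coeff_C_mul, coeff_rescale, coeff_derivativeFun']
    rw [pow_succ]
    ring
  have hrH : rescale s (Htilde l δ) = C s * Htilde l δ := by
    ext n
    rw [coeff_rescale, coeff_C_mul, Htilde, map_add, coeff_C_mul, coeff_X_pow, coeff_X_pow]
    by_cases h1 : n = l + 1
    · subst h1
      rw [if_pos rfl, if_neg (by omega), hsl1]
    · by_cases h2 : n = 2 * l + 1
      · subst h2
        rw [if_neg h1, if_pos rfl, hs2l1]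
      · rw [if_neg h1, if_neg h2]
        ring
  have hRC : rescale s (C δ) = C δ := by
    ext n
    rw [coeff_rescale, coeff_C]
    split_ifs with h
    · subst h; rw [pow_zero, one_mul]
    · rw [mul_zero]
  have derivativeFun_C_mul : ∀ (a : k) (f : PowerSeries k),
      derivativeFun (C a * f) = C a * derivativeFun f := by
    intro a f
    rw [derivativeFun_mul, derivativeFun_C', smul_zero, add_zero, smul_eq_mul]
  rw [AJ, AJ, map_sub (rescale s), map_add (rescale s), map_mul (rescale s),
    map_mul (rescale s), map_pow (rescale s), map_pow (rescale s), hRC, hrH,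
    derivativeFun_C_mul, hrD, mul_pow, mul_pow, ← map_pow (C (R := k)) s⁻¹ (l+1),
    ← map_pow (C (R := k)) s⁻¹ (2*l+1), hsil1, hsil2]
  ring

end Rescale

lemma part_b (l : ℕ) (hl : 1 ≤ l) (δ : k) (Φ : PowerSeries k)
    (h0 : constantCoeff Φ = 0) (h1 : coeff 1 Φ = 1)
    (heq : comp (Htilde l δ) Φ = derivativeFun Φ * Htilde l δ) :
    ∀ j, 2 ≤ j → ¬ j ≡ 1 [MOD l] → coeff j Φ = 0 := by
  intro j hj hmod
  have hAJ : AJ l δ Φ = 0 := (equation_iff h0 l δ).mp heq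
  have hdvd : ¬ (l ∣ j - 1) := by
    intro hd
    exact hmod (((Nat.modEq_iff_dvd' (by omega)).mpr hd).symm)
  let lp : ℕ+ := ⟨l, hl⟩
  let K := CyclotomicField lp k
  letI : CharZero K := charZero_of_injective_algebraMap (algebraMap k K).injective
  obtain ⟨ζ, hζ⟩ := IsCyclotomicExtension.exists_isPrimitiveRoot k K
    (Set.mem_singleton (lp : ℕ)) lp.ne_zero
  have hζl : ζ ^ l = 1 := hζ.pow_eq_one
  have hζ0 : ζ ≠ 0 := by
    intro h
    rw [h, zero_pow (by omega : l ≠ 0)] at hζl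
    exact one_ne_zero hζl.symm
  set σ := algebraMap k K with hσ
  set Φ' := PowerSeries.map σ Φ with hΦ'
  have h0' : constantCoeff Φ' = 0 := by
    rw [hΦ', ← coeff_zero_eq_constantCoeff, coeff_map, coeff_zero_eq_constantCoeff, h0,
      map_zero]
  have h1' : coeff 1 Φ' = 1 := by rw [hΦ', coeff_map, h1, map_one]
  have hAJ' : AJ l (σ δ) Φ' = 0 := by
    rw [hΦ', ← map_AJ, hAJ, map_zero]
  set Φ'' := C ζ⁻¹ * rescale ζ Φ' with hΦ''
  have coeffΦ'' : ∀ n, coeff n Φ'' = ζ⁻¹ * (ζ ^ n * coeff n Φ') := by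
    intro n
    rw [hΦ'', coeff_C_mul, coeff_rescale]
  have h0'' : constantCoeff Φ'' = 0 := by
    rw [← coeff_zero_eq_constantCoeff, coeffΦ'', coeff_zero_eq_constantCoeff, h0']
    ring
  have h1'' : coeff 1 Φ'' = 1 := by
    rw [coeffΦ'', h1', pow_one, mul_one, inv_mul_cancel₀ hζ0]
  have hζl1 : ζ ^ (l + 1) = ζ := by rw [pow_succ, hζl, one_mul]
  have hc'' : coeff (l + 1) Φ'' = coeff (l + 1) Φ' := by
    rw [coeffΦ'', hζl1, ← mul_assoc, inv_mul_cancel₀ hζ0, one_mul]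
  have hAJ'' : AJ l (σ δ) Φ'' = 0 := by
    rw [hΦ'', rescale_AJ l hl (σ δ) hζl hζ0, hAJ', map_zero, mul_zero]
  have huniq : Φ'' = Φ' := sol_unique l hl (σ δ) h0'' h1'' h0' h1' hc'' hAJ'' hAJ'
  have hj' : ζ⁻¹ * (ζ ^ j * coeff j Φ') = coeff j Φ' := by
    rw [← coeffΦ'', huniq]
  have hzj : ζ ^ (j - 1) ≠ 1 := by
    intro h
    exact hdvd ((hζ.pow_eq_one_iff_dvd (j - 1)).mp h)
  have heq2 : (ζ⁻¹ * ζ ^ j - 1) * coeff j Φ' = 0 := by linear_combination hj'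
  rcases mul_eq_zero.mp heq2 with h | h
  · exfalso
    apply hzj
    have h2 : ζ⁻¹ * ζ ^ j = 1 := by linear_combination h
    have h3 : ζ ^ j = ζ := by
      rw [inv_mul_eq_iff_eq_mul₀ hζ0, mul_one] at h2
      linear_combination h2
    have h4 : ζ ^ (j - 1) * ζ = ζ := by
      rw [← pow_succ]
      have : j - 1 + 1 = j := by omega
      rw [this, h3]
    exact mul_right_cancel₀ hζ0 (by rw [h4, one_mul])
  · rw [hΦ', coeff_map] at h
    exact (RingHom.injective σ) (by rw [h, map_zero])

lemma not_modeq_of_le (l n : ℕ) (h2 : 2 ≤ n) (hn : n ≤ l) : ¬ n ≡ 1 [MOD l] := by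
  intro h
  have hl2 : 2 ≤ l := le_trans h2 hn
  unfold Nat.ModEq at h
  have h1 : 1 % l = 1 := Nat.mod_eq_of_lt (by omega)
  rcases Nat.eq_or_lt_of_le hn with rfl | hlt
  · rw [Nat.mod_self, h1] at h
    omega
  · rw [Nat.mod_eq_of_lt hlt, h1] at h
    omega

lemma comp_const (Φ₁ Φ₂ : PowerSeries k) (h10 : constantCoeff Φ₁ = 0) :
    constantCoeff (comp Φ₁ Φ₂) = 0 := by
  rw [← coeff_zero_eq_constantCoeff, coeff_comp]
  rw [Finset.sum_range_succ, Finset.sum_range_zero, zero_add, coeff_zero_eq_constantCoeff,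
    h10, zero_mul]

lemma comp_coeff_one (Φ₁ Φ₂ : PowerSeries k) (h10 : constantCoeff Φ₁ = 0)
    (h11 : coeff 1 Φ₁ = 1) (h21 : coeff 1 Φ₂ = 1) :
    coeff 1 (comp Φ₁ Φ₂) = 1 := by
  rw [coeff_comp]
  rw [Finset.sum_range_succ, Finset.sum_range_one]
  rw [pow_zero, pow_one, h11, h21, mul_one]
  have : coeff 1 (1 : PowerSeries k) = 0 := by
    rw [← map_one (C (R := k)), coeff_C, if_neg one_ne_zero]
  rw [this, mul_zero, zero_add]

lemma comp_coeff_top (l : ℕ) (hl : 1 ≤ l) (δ : k) (Φ₁ Φ₂ : PowerSeries k)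
    (h10 : constantCoeff Φ₁ = 0) (h11 : coeff 1 Φ₁ = 1)
    (h20 : constantCoeff Φ₂ = 0) (h21 : coeff 1 Φ₂ = 1)
    (heq1 : comp (Htilde l δ) Φ₁ = derivativeFun Φ₁ * Htilde l δ) :
    coeff (l + 1) (comp Φ₁ Φ₂) = coeff (l + 1) Φ₁ + coeff (l + 1) Φ₂ := by
  rw [coeff_comp]
  have hterm : ∀ n ∈ Finset.range (l + 2),
      coeff n Φ₁ * coeff (l + 1) (Φ₂ ^ n)
        = (if n = 1 then coeff (l + 1) Φ₂ else 0)
          + (if n = l + 1 then coeff (l + 1) Φ₁ else 0) := by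
    intro n hn
    rw [Finset.mem_range] at hn
    rcases Nat.lt_or_ge n 2 with h2 | h2
    · interval_cases n
      · rw [if_neg (by omega), if_neg (by omega), pow_zero]
        have : coeff (l + 1) (1 : PowerSeries k) = 0 := by
          rw [← map_one (C (R := k)), coeff_C, if_neg (by omega)]
        rw [this, mul_zero, add_zero]
      · rw [if_pos rfl, if_neg (by omega), pow_one, h11, one_mul, add_zero]
    · by_cases hc : n = l + 1
      · subst hc
        rw [if_neg (by omega), if_pos rfl, coeff_self_pow h20, h21, one_pow, mul_one,
          zero_add]
      · have hnl : n ≤ l := by omega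
        rw [part_b l hl δ Φ₁ h10 h11 heq1 n h2 (not_modeq_of_le l n h2 hnl), zero_mul,
          if_neg (by omega), if_neg hc, add_zero]
  rw [Finset.sum_congr rfl hterm, Finset.sum_add_distrib, Finset.sum_ite_eq' (Finset.range (l+2)),
    Finset.sum_ite_eq' (Finset.range (l+2)), if_pos (by simp only [Finset.mem_range]; omega), if_pos (by simp only [Finset.mem_range]; omega)]
  ring

lemma comp_is_solution (l : ℕ) (hl : 1 ≤ l) (δ : k) (Φ₁ Φ₂ : PowerSeries k)
    (h10 : constantCoeff Φ₁ = 0) (h20 : constantCoeff Φ₂ = 0)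
    (heq1 : comp (Htilde l δ) Φ₁ = derivativeFun Φ₁ * Htilde l δ)
    (heq2 : comp (Htilde l δ) Φ₂ = derivativeFun Φ₂ * Htilde l δ) :
    comp (Htilde l δ) (comp Φ₁ Φ₂) = derivativeFun (comp Φ₁ Φ₂) * Htilde l δ := by
  have hΨ0 : constantCoeff (comp Φ₁ Φ₂) = 0 := comp_const Φ₁ Φ₂ h10
  have hE1 : Φ₁ ^ (l+1) + C δ * Φ₁ ^ (2*l+1) = derivativeFun Φ₁ * Htilde l δ := by
    rw [← comp_Htilde h10]; exact heq1
  have hE2 : Φ₂ ^ (l+1) + C δ * Φ₂ ^ (2*l+1) = derivativeFun Φ₂ * Htilde l δ := by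
    rw [← comp_Htilde h20]; exact heq2
  rw [comp_Htilde hΨ0, derivativeFun_comp h20]
  calc (comp Φ₁ Φ₂) ^ (l+1) + C δ * (comp Φ₁ Φ₂) ^ (2*l+1)
      = comp (Φ₁ ^ (l+1) + C δ * Φ₁ ^ (2*l+1)) Φ₂ := by
        rw [comp_add, comp_pow h20, comp_C_mul h20, comp_pow h20]
    _ = comp (derivativeFun Φ₁ * Htilde l δ) Φ₂ := by rw [hE1]
    _ = comp (derivativeFun Φ₁) Φ₂ * (Φ₂ ^ (l+1) + C δ * Φ₂ ^ (2*l+1)) := by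
        rw [comp_mul h20, comp_Htilde h20]
    _ = comp (derivativeFun Φ₁) Φ₂ * (derivativeFun Φ₂ * Htilde l δ) := by rw [hE2]
    _ = comp (derivativeFun Φ₁) Φ₂ * derivativeFun Φ₂ * Htilde l δ := by ring

/-- For `H̃ = X^(l+1) + δX^(2l+1)`:
(a) for every `c` there is a unique solution `Φ = X + cX^(l+1) + …` of
`H̃∘Φ = Φ′·H̃`;
(b) all coefficients of such a solution at exponents `j ≥ 2` with
`j ≢ 1 (mod l)` vanish;
(c) any two such solutions commute and the coefficient of `X^(l+1)` is additive
under composition, so this solution group is isomorphic to `(k, +)`. -/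
theorem aczel_jabotinsky_normalized_solution_group (l : ℕ) (hl : 1 ≤ l) (δ : k) :
    (∀ c : k, ∃! Φ : PowerSeries k,
        constantCoeff Φ = 0 ∧ coeff 1 Φ = 1 ∧ coeff (l + 1) Φ = c ∧
        comp (Htilde l δ) Φ = derivativeFun Φ * Htilde l δ) ∧
    (∀ Φ : PowerSeries k,
        constantCoeff Φ = 0 → coeff 1 Φ = 1 →
        comp (Htilde l δ) Φ = derivativeFun Φ * Htilde l δ →
        ∀ j, 2 ≤ j → ¬ j ≡ 1 [MOD l] → coeff j Φ = 0) ∧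
    (∀ Φ₁ Φ₂ : PowerSeries k,
        constantCoeff Φ₁ = 0 → coeff 1 Φ₁ = 1 →
        constantCoeff Φ₂ = 0 → coeff 1 Φ₂ = 1 →
        comp (Htilde l δ) Φ₁ = derivativeFun Φ₁ * Htilde l δ →
        comp (Htilde l δ) Φ₂ = derivativeFun Φ₂ * Htilde l δ →
        comp Φ₁ Φ₂ = comp Φ₂ Φ₁ ∧
          coeff (l + 1) (comp Φ₁ Φ₂)
            = coeff (l + 1) Φ₁ + coeff (l + 1) Φ₂) := by
  refine ⟨part_a l hl δ, fun Φ h0 h1 heq => part_b l hl δ Φ h0 h1 heq, ?_⟩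
  intro Φ₁ Φ₂ h10 h11 h20 h21 heq1 heq2
  have hcomp12top := comp_coeff_top l hl δ Φ₁ Φ₂ h10 h11 h20 h21 heq1
  have hcomp21top := comp_coeff_top l hl δ Φ₂ Φ₁ h20 h21 h10 h11 heq2
  refine ⟨?_, hcomp12top⟩
  exact sol_unique l hl δ (comp_const Φ₁ Φ₂ h10) (comp_coeff_one Φ₁ Φ₂ h10 h11 h21)
    (comp_const Φ₂ Φ₁ h20) (comp_coeff_one Φ₂ Φ₁ h20 h21 h11)
    (by rw [hcomp12top, hcomp21top]; ring)
    ((equation_iff (comp_const Φ₁ Φ₂ h10) l δ).mp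
      (comp_is_solution l hl δ Φ₁ Φ₂ h10 h20 heq1 heq2))
    ((equation_iff (comp_const Φ₂ Φ₁ h20) l δ).mp
      (comp_is_solution l hl δ Φ₂ Φ₁ h20 h10 heq2 heq1))
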